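/- Causal effect identity for binary exposure and response: suppose D is acyclic, all entries θ^{j|pa(j)}_{m|s} are strictly positive, and 𝒳_h = 𝒳_{j₀} = {0,1} with j₀ ≠ h. Define E[X_{j₀} | do(X_h = x̃)] = Σ_{x : x_h = x̃} x_{j₀} · p(x | do(X_h = x̃)). Then the causal effect c = E[X_{j₀} | do(X_h = 1)] − E[X_{j₀} | do(X_h = 0)] satisfies c = Σ_{s∈𝒳_{pa(h)}} [P(X_{j₀}=1 | X_h=1, X_{pa(h)}=s) − P(X_{j₀}=1 | X_h=0, X_{pa(h)}=s)] · P(X_{pa(h)}=s), where conditional probabilities are defined as ratios P(X_{j₀}=1, X_h=x̃, X_{pa(h)}=s)/P(X_h=x̃, X_{pa(h)}=s) and P(·) denotes the sum of p(x) over all x ∈ 𝒳_V satisfying the stated coordinate constraints. -/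

import Mathlib

open Finset

/-- A parent configuration: an assignment of a level to each variable in `S`. -/
abbrev Conf (q : ℕ) (kk : Fin q → ℕ) (S : Finset (Fin q)) : Type :=
  (u : S) → Fin (kk u)

/-- Restriction of a full configuration to the variables in `S`. -/
def restr {q : ℕ} {kk : Fin q → ℕ} (x : (j : Fin q) → Fin (kk j))
    (S : Finset (Fin q)) : Conf q kk S := fun u => x u

/-- The observational joint probability `p(x) = ∏_j θ^{j|pa(j)}_{x_j|x_{pa(j)}}`. -/
def jointP {q : ℕ} {kk : Fin q → ℕ} (pa : Fin q → Finset (Fin q))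
    (θ : (j : Fin q) → Conf q kk (pa j) → Fin (kk j) → ℝ)
    (x : (j : Fin q) → Fin (kk j)) : ℝ :=
  ∏ j : Fin q, θ j (restr x (pa j)) (x j)

open scoped Classical in
/-- `P(·)`: the probability, under the observational joint `p`, of the set of
configurations satisfying a given coordinate constraint. -/
noncomputable def probOf {q : ℕ} {kk : Fin q → ℕ} (pa : Fin q → Finset (Fin q))
    (θ : (j : Fin q) → Conf q kk (pa j) → Fin (kk j) → ℝ)
    (A : ((j : Fin q) → Fin (kk j)) → Prop) : ℝ :=
  ∑ x ∈ Finset.univ.filter A, jointP pa θ x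

open scoped Classical in
/-- `E[X_{j₀} | do(X_h = x̃)]`: the expectation of the response `X_{j₀}` under the
post-intervention (truncated) distribution `do(X_h = x̃)`. -/
noncomputable def doExp {q : ℕ} {kk : Fin q → ℕ} (pa : Fin q → Finset (Fin q))
    (θ : (j : Fin q) → Conf q kk (pa j) → Fin (kk j) → ℝ)
    (h : Fin q) (j₀ : Fin q) (xt : Fin (kk h)) : ℝ :=
  ∑ x ∈ Finset.univ.filter (fun x : (j : Fin q) → Fin (kk j) => x h = xt),
    ((x j₀ : ℕ) : ℝ) * ∏ j ∈ Finset.univ.erase h, θ j (restr x (pa j)) (x j)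

open scoped Classical in
/-- Real-valued indicator of a proposition. -/
noncomputable def IND (p : Prop) : ℝ := if p then 1 else 0

lemma IND_pos {p : Prop} (h : p) : IND p = 1 := by
  unfold IND
  exact if_pos h

lemma IND_neg {p : Prop} (h : ¬ p) : IND p = 0 := by
  unfold IND
  exact if_neg h

lemma ite_eq_IND {p : Prop} [Decidable p] (a : ℝ) : (if p then a else 0) = IND p * a := by
  by_cases h : p
  · rw [if_pos h, IND_pos h, one_mul]
  · rw [if_neg h, IND_neg h, zero_mul]

lemma IND_congr {p q : Prop} (h : p ↔ q) : IND p = IND q := by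
  by_cases hp : p
  · rw [IND_pos hp, IND_pos (h.mp hp)]
  · rw [IND_neg hp, IND_neg (fun hq => hp (h.mpr hq))]

lemma sum_IND_mul {α : Type*} [Fintype α] (a : α) (g : α → ℝ) :
    ∑ m, IND (m = a) * g m = g a := by
  classical
  rw [Finset.sum_eq_single a]
  · rw [IND_pos rfl, one_mul]
  · intro m _ hm
    rw [IND_neg hm, zero_mul]
  · intro hm
    exact absurd (Finset.mem_univ a) hm

section Aux
variable {q : ℕ} {kk : Fin q → ℕ}

noncomputable def recomb (i : Fin q) (m : Fin (kk i))
    (y : (j : {j : Fin q // j ≠ i}) → Fin (kk j)) : (j : Fin q) → Fin (kk j) :=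
  (Equiv.piSplitAt i (fun j => Fin (kk j))).symm (m, y)

lemma recomb_self (i : Fin q) (m : Fin (kk i)) (y : (j : {j : Fin q // j ≠ i}) → Fin (kk j)) :
    recomb i m y i = m := by simp [recomb]

lemma recomb_ne (i : Fin q) (m : Fin (kk i)) (y : (j : {j : Fin q // j ≠ i}) → Fin (kk j))
    (j : Fin q) (hj : j ≠ i) : recomb i m y j = y ⟨j, hj⟩ := by simp [recomb, hj]

lemma sum_split (i : Fin q) (g : ((j : Fin q) → Fin (kk j)) → ℝ) :
    ∑ x, g x = ∑ m : Fin (kk i), ∑ y, g (recomb i m y) := by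
  rw [← Equiv.sum_comp (Equiv.piSplitAt i (fun j => Fin (kk j))).symm g,
    Fintype.sum_prod_type]
  rfl

variable (pa : Fin q → Finset (Fin q)) (θ : (j : Fin q) → Conf q kk (pa j) → Fin (kk j) → ℝ)

/-- Summing out coordinate `i` when the rest `F` does not depend on it. -/
lemma sumOut (hkk : ∀ j, 1 ≤ kk j) (hθsum : ∀ j s, ∑ m : Fin (kk j), θ j s m = 1)
    (i : Fin q) (hpai : i ∉ pa i)
    (F : ((j : Fin q) → Fin (kk j)) → ℝ)
    (hF : ∀ x x' : (j : Fin q) → Fin (kk j), (∀ j, j ≠ i → x j = x' j) → F x = F x') :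
    (kk i : ℝ) * ∑ x, θ i (restr x (pa i)) (x i) * F x = ∑ x, F x := by
  set m0 : Fin (kk i) := ⟨0, hkk i⟩ with hm0
  have hFc : ∀ (m : Fin (kk i)) y, F (recomb i m y) = F (recomb i m0 y) := by
    intro m y
    exact hF _ _ (fun j hj => by rw [recomb_ne i m y j hj, recomb_ne i m0 y j hj])
  have hrc : ∀ (m : Fin (kk i)) y, restr (recomb i m y) (pa i) = restr (recomb i m0 y) (pa i) := by
    intro m y
    funext u
    have hu : (u : Fin q) ≠ i := by intro hh; have h2 := u.2; rw [hh] at h2; exact hpai h2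
    simp only [restr, recomb_ne i _ y _ hu]
  have h1 : ∑ x, θ i (restr x (pa i)) (x i) * F x = ∑ y, F (recomb i m0 y) := by
    rw [sum_split i]
    rw [Finset.sum_comm]
    apply Finset.sum_congr rfl
    intro y _
    have : ∀ m : Fin (kk i), θ i (restr (recomb i m y) (pa i)) ((recomb i m y) i) * F (recomb i m y)
        = θ i (restr (recomb i m0 y) (pa i)) m * F (recomb i m0 y) := by
      intro m
      rw [recomb_self, hFc, hrc]
    rw [Finset.sum_congr rfl (fun m _ => this m), ← Finset.sum_mul, hθsum, one_mul]
  have h2 : ∑ x, F x = (kk i : ℝ) * ∑ y, F (recomb i m0 y) := by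
    rw [sum_split i]
    rw [Finset.sum_congr rfl (fun m _ => Finset.sum_congr rfl (fun y _ => hFc m y))]
    rw [Finset.sum_const, Finset.card_univ, Fintype.card_fin, nsmul_eq_mul]
  rw [h1, h2]

/-- Fixing coordinate `i` to a given value when the rest does not depend on it. -/
lemma pickOut (hkk : ∀ j, 1 ≤ kk j) (i : Fin q) (xt : Fin (kk i))
    (F : ((j : Fin q) → Fin (kk j)) → ℝ)
    (hF : ∀ x x' : (j : Fin q) → Fin (kk j), (∀ j, j ≠ i → x j = x' j) → F x = F x') :
    (kk i : ℝ) * ∑ x, IND (x i = xt) * F x = ∑ x, F x := by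
  set m0 : Fin (kk i) := ⟨0, hkk i⟩ with hm0
  have hFc : ∀ (m : Fin (kk i)) y, F (recomb i m y) = F (recomb i m0 y) := by
    intro m y
    exact hF _ _ (fun j hj => by rw [recomb_ne i m y j hj, recomb_ne i m0 y j hj])
  have h1 : ∑ x, IND (x i = xt) * F x = ∑ y, F (recomb i m0 y) := by
    rw [sum_split i]
    have e : ∀ (m : Fin (kk i)) (y), IND ((recomb i m y) i = xt) * F (recomb i m y)
        = IND (m = xt) * F (recomb i m0 y) := by
      intro m y
      rw [recomb_self, hFc]
    rw [Finset.sum_congr rfl (fun m _ => Finset.sum_congr rfl (fun y _ => e m y))]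
    rw [Finset.sum_comm]
    apply Finset.sum_congr rfl
    intro y _
    exact sum_IND_mul xt (fun _ => F (recomb i m0 y))
  have h2 : ∑ x, F x = (kk i : ℝ) * ∑ y, F (recomb i m0 y) := by
    rw [sum_split i]
    rw [Finset.sum_congr rfl (fun m _ => Finset.sum_congr rfl (fun y _ => hFc m y))]
    rw [Finset.sum_const, Finset.card_univ, Fintype.card_fin, nsmul_eq_mul]
  rw [h1, h2]
end Aux

section Key
variable {q : ℕ} {kk : Fin q → ℕ}
variable (pa : Fin q → Finset (Fin q)) (θ : (j : Fin q) → Conf q kk (pa j) → Fin (kk j) → ℝ)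

/-- Key lemma: under `do(X_h = xt)`, the distribution of the parents of `h`
is the observational one. -/
lemma keyB (hkk : ∀ j, 1 ≤ kk j) (hpa : ∀ j, j ∉ pa j)
    (hacyclic : ∃ ρ : Fin q ≃ Fin q, ∀ j : Fin q, ∀ u ∈ pa j, ρ u < ρ j)
    (hθsum : ∀ j s, ∑ m : Fin (kk j), θ j s m = 1)
    (h : Fin q) (xt : Fin (kk h)) (s : Conf q kk (pa h)) :
    ∑ x : (j : Fin q) → Fin (kk j),
        IND (x h = xt ∧ restr x (pa h) = s) * ∏ j ∈ univ.erase h, θ j (restr x (pa j)) (x j)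
      = ∑ x : (j : Fin q) → Fin (kk j),
        IND (restr x (pa h) = s) * ∏ j, θ j (restr x (pa j)) (x j) := by
  classical
  obtain ⟨ρ, hρ⟩ := hacyclic
  set r : ℕ := (ρ h : ℕ) with hr
  have Gcong : ∀ (T : Finset (Fin q)) (i : Fin q), i ∉ T → (∀ j ∈ T, i ∉ pa j) →
      ∀ x x' : (j : Fin q) → Fin (kk j), (∀ j, j ≠ i → x j = x' j) →
      ∏ j ∈ T, θ j (restr x (pa j)) (x j) = ∏ j ∈ T, θ j (restr x' (pa j)) (x' j) := by
    intro T i hiT hpaT x x' hxx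
    apply Finset.prod_congr rfl
    intro j hj
    have h1 : restr x (pa j) = restr x' (pa j) := by
      funext u
      have hu : (u : Fin q) ≠ i := by
        intro hh
        have h2 := u.2
        rw [hh] at h2
        exact hpaT j hj h2
      exact hxx u hu
    have h2 : x j = x' j := hxx j (fun hh => hiT (hh ▸ hj))
    rw [h1, h2]
  have rcong : ∀ (i : Fin q), i ∉ pa h →
      ∀ x x' : (j : Fin q) → Fin (kk j), (∀ j, j ≠ i → x j = x' j) →
      restr x (pa h) = restr x' (pa h) := by
    intro i hi x x' hxx
    funext u
    have hu : (u : Fin q) ≠ i := by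
      intro hh
      have h2 := u.2
      rw [hh] at h2
      exact hi h2
    exact hxx u hu
  -- the single-variable elimination step
  have step : ∀ (P : ((j : Fin q) → Fin (kk j)) → Prop) (T : Finset (Fin q)) (i : Fin q),
      i ∉ T → (∀ j ∈ T, i ∉ pa j) →
      (∀ x x' : (j : Fin q) → Fin (kk j), (∀ j, j ≠ i → x j = x' j) → (P x ↔ P x')) →
      (kk i : ℝ) * (∑ x, IND (P x) * ∏ j ∈ insert i T, θ j (restr x (pa j)) (x j))
        = ∑ x, IND (P x) * ∏ j ∈ T, θ j (restr x (pa j)) (x j) := by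
    intro P T i hiT hpaT hP
    have e1 : ∀ x, IND (P x) * ∏ j ∈ insert i T, θ j (restr x (pa j)) (x j)
        = θ i (restr x (pa i)) (x i) * (IND (P x) * ∏ j ∈ T, θ j (restr x (pa j)) (x j)) := by
      intro x
      rw [Finset.prod_insert hiT]
      ring
    rw [Finset.sum_congr rfl (fun x _ => e1 x)]
    apply sumOut pa θ hkk hθsum i (hpa i)
    intro x x' hxx
    rw [IND_congr (hP x x' hxx), Gcong T i hiT hpaT x x' hxx]
  -- the family of high sets
  set Hi : ℕ → Finset (Fin q) := fun n => univ.filter (fun j => r < (ρ j : ℕ) ∧ (ρ j : ℕ) ≤ n)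
    with hHi
  -- the invariant
  have inv : ∀ (P : ((j : Fin q) → Fin (kk j)) → Prop),
      (∀ i : Fin q, r < (ρ i : ℕ) →
        ∀ x x' : (j : Fin q) → Fin (kk j), (∀ j, j ≠ i → x j = x' j) → (P x ↔ P x')) →
      ∀ (K : Finset (Fin q)), (∀ j ∈ K, (ρ j : ℕ) ≤ r) →
      ∀ n, r ≤ n →
      (∏ j ∈ K ∪ Hi n, (kk j : ℝ)) *
          (∑ x, IND (P x) * ∏ j ∈ K ∪ Hi n, θ j (restr x (pa j)) (x j))
        = (∏ j ∈ K, (kk j : ℝ)) * (∑ x, IND (P x) * ∏ j ∈ K, θ j (restr x (pa j)) (x j)) := by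
    intro P hP K hK
    refine Nat.le_induction ?_ ?_
    · have : Hi r = ∅ := by
        ext j
        simp only [hHi, Finset.mem_filter, Finset.mem_univ, true_and, Finset.notMem_empty,
          iff_false, not_and, not_lt]
        omega
      rw [this, Finset.union_empty]
    · intro n hn ih
      by_cases hq : n + 1 < q
      · set js : Fin q := ρ.symm ⟨n + 1, hq⟩ with hjs
        have hρjs : (ρ js : ℕ) = n + 1 := by simp [hjs]
        have hnotin : js ∉ K ∪ Hi n := by
          simp only [Finset.mem_union, Finset.mem_filter, hHi, Finset.mem_univ, true_and]
          rintro (hjK | ⟨-, hle⟩)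
          · have := hK js hjK
            omega
          · omega
        have hins : K ∪ Hi (n + 1) = insert js (K ∪ Hi n) := by
          ext j
          simp only [Finset.mem_union, Finset.mem_insert, Finset.mem_filter, hHi,
            Finset.mem_univ, true_and]
          constructor
          · rintro (hjK | ⟨hgt, hle⟩)
            · exact Or.inr (Or.inl hjK)
            · by_cases hj : (ρ j : ℕ) = n + 1
              · left
                have : ρ j = ρ js := by rw [Fin.ext_iff]; omega
                exact ρ.injective this
              · exact Or.inr (Or.inr ⟨hgt, by omega⟩)
          · rintro (rfl | hjK | ⟨hgt, hle⟩)
            · exact Or.inr ⟨by omega, by omega⟩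
            · exact Or.inl hjK
            · exact Or.inr ⟨hgt, by omega⟩
        have hpaT : ∀ j ∈ K ∪ Hi n, js ∉ pa j := by
          intro j hj hmem
          have h1 := hρ j js hmem
          have h2 : (ρ j : ℕ) ≤ n := by
            rcases Finset.mem_union.mp hj with hjK | hjHi
            · have := hK j hjK; omega
            · simp only [hHi, Finset.mem_filter, Finset.mem_univ, true_and] at hjHi
              exact hjHi.2
          omega
        have hstep := step P (K ∪ Hi n) js hnotin hpaT (hP js (by omega))
        rw [hins, Finset.prod_insert hnotin, mul_comm ((kk js : ℝ)) _, mul_assoc, hstep, ih]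
      · have : Hi (n + 1) = Hi n := by
          ext j
          simp only [hHi, Finset.mem_filter, Finset.mem_univ, true_and]
          have := (ρ j).2
          omega
        rw [this, ih]
  -- low sets
  set L0 : Finset (Fin q) := univ.filter (fun j => (ρ j : ℕ) ≤ r) with hL0
  set L1 : Finset (Fin q) := univ.filter (fun j => (ρ j : ℕ) ≤ r ∧ j ≠ h) with hL1
  have hhL0 : h ∈ L0 := by simp [hL0, hr]
  have hhL1 : h ∉ L1 := by simp [hL1]
  have hL01 : L0 = insert h L1 := by
    ext j
    simp only [hL0, hL1, Finset.mem_filter, Finset.mem_insert, Finset.mem_univ, true_and]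
    constructor
    · intro hj
      by_cases hjh : j = h
      · exact Or.inl hjh
      · exact Or.inr ⟨hj, hjh⟩
    · rintro (rfl | ⟨hj, -⟩)
      · exact le_rfl
      · exact hj
  have hrltq : r < q := (ρ h).2
  have hKL0 : ∀ j ∈ L0, (ρ j : ℕ) ≤ r := by
    intro j hj
    simp only [hL0, Finset.mem_filter, Finset.mem_univ, true_and] at hj
    exact hj
  have hKL1 : ∀ j ∈ L1, (ρ j : ℕ) ≤ r := by
    intro j hj
    simp only [hL1, Finset.mem_filter, Finset.mem_univ, true_and] at hj
    exact hj.1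
  have hpah : ∀ i : Fin q, r < (ρ i : ℕ) → i ∉ pa h := by
    intro i hi hmem
    have := hρ h i hmem
    omega
  have hP0c : ∀ i : Fin q, r < (ρ i : ℕ) →
      ∀ x x' : (j : Fin q) → Fin (kk j), (∀ j, j ≠ i → x j = x' j) →
      ((restr x (pa h) = s) ↔ (restr x' (pa h) = s)) := by
    intro i hi x x' hxx
    rw [rcong i (hpah i hi) x x' hxx]
  have hP1c : ∀ i : Fin q, r < (ρ i : ℕ) →
      ∀ x x' : (j : Fin q) → Fin (kk j), (∀ j, j ≠ i → x j = x' j) →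
      ((x h = xt ∧ restr x (pa h) = s) ↔ (x' h = xt ∧ restr x' (pa h) = s)) := by
    intro i hi x x' hxx
    have hih : i ≠ h := by
      intro hh
      rw [hh] at hi
      omega
    rw [rcong i (hpah i hi) x x' hxx, hxx h (fun hh => hih hh.symm)]
  have hT0q : L0 ∪ Hi q = univ := by
    ext j
    simp only [Finset.mem_union, hL0, hHi, Finset.mem_filter, Finset.mem_univ, true_and,
      iff_true]
    have := (ρ j).2
    omega
  have hT1q : L1 ∪ Hi q = univ.erase h := by
    ext j
    simp only [Finset.mem_union, hL1, hHi, Finset.mem_filter, Finset.mem_univ, true_and,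
      Finset.mem_erase, and_true]
    constructor
    · rintro (⟨-, hj⟩ | ⟨hgt, -⟩)
      · exact hj
      · intro hh
        rw [hh] at hgt
        omega
    · intro hj
      by_cases hle : (ρ j : ℕ) ≤ r
      · exact Or.inl ⟨hle, hj⟩
      · have := (ρ j).2
        exact Or.inr ⟨by omega, by omega⟩
  have inv0 := inv (fun x => restr x (pa h) = s) hP0c L0 hKL0 q (le_of_lt hrltq)
  have inv1 := inv (fun x => x h = xt ∧ restr x (pa h) = s) hP1c L1 hKL1 q (le_of_lt hrltq)
  rw [hT0q] at inv0
  rw [hT1q] at inv1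
  -- base relation
  have hpaL1 : ∀ j ∈ L1, h ∉ pa j := by
    intro j hj hmem
    simp only [hL1, Finset.mem_filter, Finset.mem_univ, true_and] at hj
    have h1 := hρ j h hmem
    have h2 : ρ j ≠ ρ h := fun hh => hj.2 (ρ.injective hh)
    have h3 : (ρ j : ℕ) ≠ r := fun hh => h2 (Fin.ext hh)
    have h4 := hj.1
    omega
  have hb0 : (kk h : ℝ) *
      (∑ x, IND (restr x (pa h) = s) * ∏ j ∈ L0, θ j (restr x (pa j)) (x j))
      = ∑ x, IND (restr x (pa h) = s) * ∏ j ∈ L1, θ j (restr x (pa j)) (x j) := by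
    rw [hL01]
    exact step (fun x => restr x (pa h) = s) L1 h hhL1 hpaL1
      (fun x x' hxx => by show restr x (pa h) = s ↔ restr x' (pa h) = s; rw [rcong h (hpa h) x x' hxx])
  have hb1 : (kk h : ℝ) *
      (∑ x, IND (x h = xt ∧ restr x (pa h) = s) * ∏ j ∈ L1, θ j (restr x (pa j)) (x j))
      = ∑ x, IND (restr x (pa h) = s) * ∏ j ∈ L1, θ j (restr x (pa j)) (x j) := by
    have e1 : ∀ x : (j : Fin q) → Fin (kk j),
        IND (x h = xt ∧ restr x (pa h) = s) * ∏ j ∈ L1, θ j (restr x (pa j)) (x j)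
        = IND (x h = xt) *
            (IND (restr x (pa h) = s) * ∏ j ∈ L1, θ j (restr x (pa j)) (x j)) := by
      intro x
      by_cases hxh : x h = xt
      · by_cases hres : restr x (pa h) = s
        · rw [IND_pos ⟨hxh, hres⟩, IND_pos hxh, IND_pos hres]
          ring
        · rw [IND_neg (fun hc => hres hc.2), IND_neg hres]
          ring
      · rw [IND_neg (fun hc => hxh hc.1), IND_neg hxh]
        ring
    rw [Finset.sum_congr rfl (fun x _ => e1 x)]
    apply pickOut hkk h xt
    intro x x' hxx
    rw [rcong h (hpa h) x x' hxx, Gcong L1 h hhL1 hpaL1 x x' hxx]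
  have hkkh : (kk h : ℝ) ≠ 0 := by
    have := hkk h
    positivity
  have hbase : (∑ x, IND (x h = xt ∧ restr x (pa h) = s) *
        ∏ j ∈ L1, θ j (restr x (pa j)) (x j))
      = ∑ x, IND (restr x (pa h) = s) * ∏ j ∈ L0, θ j (restr x (pa j)) (x j) := by
    apply mul_left_cancel₀ hkkh
    rw [hb0, hb1]
  have hprodL0 : (∏ j ∈ L0, (kk j : ℝ)) = (kk h : ℝ) * ∏ j ∈ L1, (kk j : ℝ) := by
    rw [hL01, Finset.prod_insert hhL1]
  have hproduniv : (∏ j : Fin q, (kk j : ℝ))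
      = (kk h : ℝ) * ∏ j ∈ univ.erase h, (kk j : ℝ) :=
    (Finset.mul_prod_erase univ _ (Finset.mem_univ h)).symm
  have hprodne : (∏ j ∈ univ.erase h, (kk j : ℝ)) ≠ 0 := by
    apply Finset.prod_ne_zero_iff.mpr
    intro j _
    have := hkk j
    positivity
  have main : ((kk h : ℝ) * ∏ j ∈ univ.erase h, (kk j : ℝ)) *
      (∑ x, IND (x h = xt ∧ restr x (pa h) = s) *
        ∏ j ∈ univ.erase h, θ j (restr x (pa j)) (x j))
      = ((kk h : ℝ) * ∏ j ∈ univ.erase h, (kk j : ℝ)) *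
      (∑ x, IND (restr x (pa h) = s) * ∏ j : Fin q, θ j (restr x (pa j)) (x j)) := by
    calc ((kk h : ℝ) * ∏ j ∈ univ.erase h, (kk j : ℝ)) *
        (∑ x, IND (x h = xt ∧ restr x (pa h) = s) *
          ∏ j ∈ univ.erase h, θ j (restr x (pa j)) (x j))
        = (kk h : ℝ) * ((∏ j ∈ univ.erase h, (kk j : ℝ)) *
          (∑ x, IND (x h = xt ∧ restr x (pa h) = s) *
            ∏ j ∈ univ.erase h, θ j (restr x (pa j)) (x j))) := by ring
      _ = (kk h : ℝ) * ((∏ j ∈ L1, (kk j : ℝ)) *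
          (∑ x, IND (x h = xt ∧ restr x (pa h) = s) *
            ∏ j ∈ L1, θ j (restr x (pa j)) (x j))) := by rw [inv1]
      _ = (kk h : ℝ) * ((∏ j ∈ L1, (kk j : ℝ)) *
          (∑ x, IND (restr x (pa h) = s) * ∏ j ∈ L0, θ j (restr x (pa j)) (x j))) := by
          rw [hbase]
      _ = (∏ j ∈ L0, (kk j : ℝ)) *
          (∑ x, IND (restr x (pa h) = s) * ∏ j ∈ L0, θ j (restr x (pa j)) (x j)) := by
          rw [hprodL0]; ring
      _ = (∏ j : Fin q, (kk j : ℝ)) *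
          (∑ x, IND (restr x (pa h) = s) * ∏ j : Fin q, θ j (restr x (pa j)) (x j)) := by
          rw [inv0]
      _ = ((kk h : ℝ) * ∏ j ∈ univ.erase h, (kk j : ℝ)) *
          (∑ x, IND (restr x (pa h) = s) * ∏ j : Fin q, θ j (restr x (pa j)) (x j)) := by
          rw [hproduniv]
  exact mul_left_cancel₀ (mul_ne_zero hkkh hprodne) main

end Key

lemma IND_mul (p r : Prop) : IND p * IND r = IND (p ∧ r) := by
  by_cases hp : p
  · by_cases hr : r
    · rw [IND_pos hp, IND_pos hr, IND_pos ⟨hp, hr⟩, one_mul]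
    · rw [IND_neg hr, IND_neg (show ¬(p ∧ r) from fun hc => hr hc.2), mul_zero]
  · rw [IND_neg hp, IND_neg (show ¬(p ∧ r) from fun hc => hp hc.1), zero_mul]

lemma IND_nonneg (p : Prop) : 0 ≤ IND p := by
  by_cases hp : p
  · rw [IND_pos hp]; norm_num
  · rw [IND_neg hp]

lemma sum_IND_mul' {α : Type*} [Fintype α] (a : α) (g : α → ℝ) :
    ∑ m, IND (a = m) * g m = g a := by
  rw [Finset.sum_congr rfl (fun m _ => by rw [IND_congr (eq_comm (a := a) (b := m))])]
  exact sum_IND_mul a g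


set_option maxHeartbeats 1000000 in
/-- Causal effect identity for a binary exposure `X_h` and binary response `X_{j₀}`:
for an acyclic DAG with strictly positive conditional probability tables, the causal
effect `c = E[X_{j₀} | do(X_h = 1)] − E[X_{j₀} | do(X_h = 0)]` equals the
parent-adjusted difference of observational conditional probabilities. -/
theorem causal_effect_binary (q : ℕ) (kk : Fin q → ℕ) (hkk : ∀ j, 1 ≤ kk j)
    (pa : Fin q → Finset (Fin q)) (hpa : ∀ j, j ∉ pa j)
    (hacyclic : ∃ ρ : Fin q ≃ Fin q, ∀ j : Fin q, ∀ u ∈ pa j, ρ u < ρ j)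
    (θ : (j : Fin q) → Conf q kk (pa j) → Fin (kk j) → ℝ)
    (hθpos : ∀ j s m, 0 < θ j s m)
    (hθsum : ∀ j s, ∑ m : Fin (kk j), θ j s m = 1)
    (h : Fin q) (j₀ : Fin q) (hj₀ : j₀ ≠ h)
    (hbinh : kk h = 2) (hbinj : kk j₀ = 2) :
    doExp pa θ h j₀ ⟨1, by omega⟩ - doExp pa θ h j₀ ⟨0, by omega⟩ =
      ∑ s : Conf q kk (pa h),
        (probOf pa θ (fun x => x j₀ = ⟨1, by omega⟩ ∧ x h = ⟨1, by omega⟩ ∧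
              restr x (pa h) = s) /
            probOf pa θ (fun x => x h = ⟨1, by omega⟩ ∧ restr x (pa h) = s) -
          probOf pa θ (fun x => x j₀ = ⟨1, by omega⟩ ∧ x h = ⟨0, by omega⟩ ∧
              restr x (pa h) = s) /
            probOf pa θ (fun x => x h = ⟨0, by omega⟩ ∧ restr x (pa h) = s)) *
          probOf pa θ (fun x => restr x (pa h) = s) := by
  classical
  have honej : ((⟨1, by omega⟩ : Fin (kk j₀)) : ℕ) = 1 := rfl
  set onej : Fin (kk j₀) := ⟨1, by omega⟩ with honejdef
  set G : ((j : Fin q) → Fin (kk j)) → ℝ :=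
    fun x => ∏ j ∈ univ.erase h, θ j (restr x (pa j)) (x j) with hG
  have probOf_IND : ∀ A : ((j : Fin q) → Fin (kk j)) → Prop,
      probOf pa θ A = ∑ x, IND (A x) * jointP pa θ x := by
    intro A
    rw [probOf, Finset.sum_filter]
    exact Finset.sum_congr rfl fun x _ => ite_eq_IND _
  have doExp_IND : ∀ xt : Fin (kk h),
      doExp pa θ h j₀ xt = ∑ x, IND (x h = xt) * (((x j₀ : ℕ) : ℝ) * G x) := by
    intro xt
    rw [doExp, Finset.sum_filter]
    exact Finset.sum_congr rfl fun x _ => ite_eq_IND _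
  have hjsplit : ∀ x, jointP pa θ x = θ h (restr x (pa h)) (x h) * G x := by
    intro x
    rw [jointP, hG]
    exact (Finset.mul_prod_erase univ _ (Finset.mem_univ h)).symm
  set A2 : Fin (kk h) → Conf q kk (pa h) → ℝ := fun xt s =>
    ∑ x, IND (x j₀ = onej ∧ x h = xt ∧ restr x (pa h) = s) * G x with hA2
  set Ps : Conf q kk (pa h) → ℝ := fun s =>
    ∑ x, IND (restr x (pa h) = s) * jointP pa θ x with hPs
  -- numerator factorization
  have hN : ∀ (xt : Fin (kk h)) (s : Conf q kk (pa h)),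
      (∑ x, IND (x j₀ = onej ∧ x h = xt ∧ restr x (pa h) = s) * jointP pa θ x)
        = θ h s xt * A2 xt s := by
    intro xt s
    simp only [hA2]
    rw [Finset.mul_sum]
    apply Finset.sum_congr rfl
    intro x _
    by_cases hx : x j₀ = onej ∧ x h = xt ∧ restr x (pa h) = s
    · rw [IND_pos hx, one_mul, one_mul, hjsplit x, hx.2.1, hx.2.2]
    · rw [IND_neg hx, zero_mul, zero_mul, mul_zero]
  -- denominator factorization
  have hD : ∀ (xt : Fin (kk h)) (s : Conf q kk (pa h)),
      (∑ x, IND (x h = xt ∧ restr x (pa h) = s) * jointP pa θ x)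
        = θ h s xt * ∑ x, IND (x h = xt ∧ restr x (pa h) = s) * G x := by
    intro xt s
    rw [Finset.mul_sum]
    apply Finset.sum_congr rfl
    intro x _
    by_cases hx : x h = xt ∧ restr x (pa h) = s
    · rw [IND_pos hx, one_mul, one_mul, hjsplit x, hx.1, hx.2]
    · rw [IND_neg hx, zero_mul, zero_mul, mul_zero]
  -- key lemma
  have hBP : ∀ (xt : Fin (kk h)) (s : Conf q kk (pa h)),
      (∑ x, IND (x h = xt ∧ restr x (pa h) = s) * G x) = Ps s := by
    intro xt s
    simp only [hPs, hG, jointP]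
    exact keyB pa θ hkk hpa hacyclic hθsum h xt s
  -- positivity
  have hjointpos : ∀ x, 0 < jointP pa θ x := by
    intro x
    rw [jointP]
    exact Finset.prod_pos fun j _ => hθpos j _ _
  have hPspos : ∀ s, 0 < Ps s := by
    intro s
    simp only [hPs]
    apply Finset.sum_pos'
    · intro x _
      exact mul_nonneg (IND_nonneg _) (le_of_lt (hjointpos x))
    · refine ⟨fun j => if hj : j ∈ pa h then s ⟨j, hj⟩ else ⟨0, hkk j⟩, Finset.mem_univ _, ?_⟩
      have hres : restr (fun j => if hj : j ∈ pa h then s ⟨j, hj⟩ else ⟨0, hkk j⟩) (pa h) = s := by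
        funext u
        simp only [restr, dif_pos u.2]
      rw [IND_pos hres, one_mul]
      exact hjointpos _
  -- cast of binary response
  have castfact : ∀ m : Fin (kk j₀), ((m : ℕ) : ℝ) = IND (m = onej) := by
    intro m
    by_cases hm : m = onej
    · rw [hm, IND_pos rfl, honej]
      norm_num
    · rw [IND_neg hm]
      have h2 := m.2
      have hne : (m : ℕ) ≠ 1 := by
        intro hh
        exact hm (Fin.ext (by rw [hh, honej]))
      have h0 : (m : ℕ) = 0 := by
        have h3 := m.2
        omega
      rw [h0]
      norm_num
  -- partition of a sum according to the parent configuration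
  have partition : ∀ (Q : ((j : Fin q) → Fin (kk j)) → Prop) (g : ((j : Fin q) → Fin (kk j)) → ℝ),
      ∑ x, IND (Q x) * g x
        = ∑ s : Conf q kk (pa h), ∑ x, IND (Q x ∧ restr x (pa h) = s) * g x := by
    intro Q g
    rw [Finset.sum_comm]
    apply Finset.sum_congr rfl
    intro x _
    by_cases hQ : Q x
    · rw [Finset.sum_congr rfl fun s _ => by rw [IND_congr (and_iff_right hQ)]]
      rw [sum_IND_mul' (restr x (pa h)) (fun _ => g x), IND_pos hQ, one_mul]
    · rw [IND_neg hQ, zero_mul]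
      symm
      apply Finset.sum_eq_zero
      intro s _
      rw [IND_neg (fun hc => hQ hc.1), zero_mul]
  -- expectation as a sum over parent configurations
  have hdo : ∀ xt : Fin (kk h), doExp pa θ h j₀ xt = ∑ s : Conf q kk (pa h), A2 xt s := by
    intro xt
    rw [doExp_IND xt]
    have e : ∀ x, IND (x h = xt) * (((x j₀ : ℕ) : ℝ) * G x)
        = IND (x j₀ = onej ∧ x h = xt) * G x := by
      intro x
      rw [castfact (x j₀), ← mul_assoc, IND_mul, IND_congr (and_comm)]
    rw [Finset.sum_congr rfl fun x _ => e x, partition (fun x => x j₀ = onej ∧ x h = xt) G]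
    apply Finset.sum_congr rfl
    intro s _
    simp only [hA2]
    exact Finset.sum_congr rfl fun x _ => by rw [IND_congr (and_assoc)]
  -- the conditional-probability identity, for each exposure level
  have key : ∀ (xt : Fin (kk h)) (s : Conf q kk (pa h)),
      probOf pa θ (fun x => x j₀ = onej ∧ x h = xt ∧ restr x (pa h) = s) /
          probOf pa θ (fun x => x h = xt ∧ restr x (pa h) = s) *
          probOf pa θ (fun x => restr x (pa h) = s)
        = A2 xt s := by
    intro xt s
    have e3 : probOf pa θ (fun x => restr x (pa h) = s) = Ps s := by
      rw [probOf_IND]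
    have e1 : probOf pa θ (fun x => x j₀ = onej ∧ x h = xt ∧ restr x (pa h) = s)
        = θ h s xt * A2 xt s := by
      rw [probOf_IND]
      exact hN xt s
    have e2 : probOf pa θ (fun x => x h = xt ∧ restr x (pa h) = s) = θ h s xt * Ps s := by
      rw [probOf_IND, hD xt s, hBP xt s]
    rw [e1, e2, e3, mul_div_mul_left _ _ (ne_of_gt (hθpos h s xt))]
    exact div_mul_cancel₀ _ (ne_of_gt (hPspos s))
  rw [hdo, hdo, ← Finset.sum_sub_distrib]
  symm
  apply Finset.sum_congr rfl
  intro s _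
  rw [sub_mul, key _ s, key _ s]
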